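/- Let Ω be a nonempty open subset of ℝ^{n+1} (n ≥ 1) with nonempty topological boundary ∂Ω, and let u(y) = dist(y, ∂Ω). Let t > 0 and let (x, z) and (x′, z′) be two configurations: x, x′ ∈ ∂Ω, z, z′ ∈ Ω, u(z) = ‖x − z‖ = t and u(z′) = ‖x′ − z′‖ = t. For 0 < a ≤ b ≤ t set y_a = x + (a/t)(z − x), y′_a = x′ + (a/t)(z′ − x′), and similarly y_b, y′_b. Then ‖y_b − y′_b‖ ≤ (b/a) ‖y_a − y′_a‖. In other words, the map flowing points of ∂Ω_a outward along their minimizing segments to ∂Ω_b is (b/a)-Lipschitz. -/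

import Mathlib

open RealInnerProductSpace Metric Set


private lemma quad_aux (W B C a b t : ℝ) (hW : 0 ≤ W) (hC : 0 ≤ C) (hB : -W ≤ B)
    (ha : 0 < a) (hab : a ≤ b) (hbt : b ≤ t) :
    W + 2 * (b / t) * B + (b / t) ^ 2 * C ≤
      (b / a) ^ 2 * (W + 2 * (a / t) * B + (a / t) ^ 2 * C) := by
  have ht : 0 < t := ha.trans_le (hab.trans hbt)
  have key2 : 0 ≤ t * (b - a) * (W * (t * (a + b) - 2 * a * b) + 2 * a * b * (B + W)) := by
    apply mul_nonneg (mul_nonneg ht.le (by linarith))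
    have h3 : 0 ≤ t * (a + b) - 2 * a * b := by nlinarith
    have h4 : 0 ≤ B + W := by linarith
    have h5 : 0 ≤ W * (t * (a + b) - 2 * a * b) := mul_nonneg hW h3
    have h6 : 0 ≤ 2 * a * b * (B + W) := mul_nonneg (by nlinarith) h4
    linarith
  have hpos : (0:ℝ) < a ^ 2 * t ^ 2 := by positivity
  rw [← mul_le_mul_iff_of_pos_right hpos]
  have lhs_eq : (W + 2 * (b / t) * B + (b / t) ^ 2 * C) * (a ^ 2 * t ^ 2)
      = a ^ 2 * t ^ 2 * W + 2 * a ^ 2 * t * b * B + a ^ 2 * b ^ 2 * C := by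
    field_simp
  have rhs_eq : (b / a) ^ 2 * (W + 2 * (a / t) * B + (a / t) ^ 2 * C) * (a ^ 2 * t ^ 2)
      = b ^ 2 * t ^ 2 * W + 2 * a * b ^ 2 * t * B + a ^ 2 * b ^ 2 * C := by
    field_simp
  rw [lhs_eq, rhs_eq]
  nlinarith [key2]

/-- The map flowing points of `∂Ω_a` outward along their minimizing segments to
`∂Ω_b` is `(b/a)`-Lipschitz: for two configurations `(x, z)` and `(x', z')` at
level `t` and `0 < a ≤ b ≤ t`, `‖y_b − y′_b‖ ≤ (b/a) ‖y_a − y′_a‖`. -/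
theorem stmt_6 (n : ℕ) (hn : 1 ≤ n)
    (Ω : Set (EuclideanSpace ℝ (Fin (n + 1))))
    (hΩopen : IsOpen Ω) (hΩne : Ω.Nonempty) (hfr : (frontier Ω).Nonempty)
    (u : EuclideanSpace ℝ (Fin (n + 1)) → ℝ)
    (hu : ∀ y, u y = Metric.infDist y (frontier Ω))
    (t : ℝ)
    (x z x' z' : EuclideanSpace ℝ (Fin (n + 1)))
    (hx : x ∈ frontier Ω) (hz : z ∈ Ω) (huz : u z = t) (hxz : ‖x - z‖ = t)
    (hx' : x' ∈ frontier Ω) (hz' : z' ∈ Ω) (huz' : u z' = t) (hxz' : ‖x' - z'‖ = t)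
    (a b : ℝ) (ha : 0 < a) (hab : a ≤ b) (hbt : b ≤ t) :
    ‖(x + (b / t) • (z - x)) - (x' + (b / t) • (z' - x'))‖ ≤
      (b / a) * ‖(x + (a / t) • (z - x)) - (x' + (a / t) • (z' - x'))‖ := by
  have ht : 0 < t := lt_of_lt_of_le ha (hab.trans hbt)
  set w := x - x' with hw
  set v := z - x with hv
  set v' := z' - x' with hv'
  have hvn : ‖v‖ = t := by rw [hv, norm_sub_rev]; exact hxz
  have hv'n : ‖v'‖ = t := by rw [hv', norm_sub_rev]; exact hxz'
  -- geometric inputs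
  have h1 : t ≤ ‖x - z'‖ := by
    have h := Metric.infDist_le_dist_of_mem (x := z') hx
    rw [← hu z'] at h
    rw [huz'] at h
    rwa [dist_eq_norm, norm_sub_rev] at h
  have h2 : t ≤ ‖x' - z‖ := by
    have h := Metric.infDist_le_dist_of_mem (x := z) hx'
    rw [← hu z] at h
    rw [huz] at h
    rwa [dist_eq_norm, norm_sub_rev] at h
  have e1 : x - z' = w - v' := by rw [hw, hv']; abel
  have e2 : x' - z = -(w + v) := by rw [hw, hv]; abel
  have hB1 : 2 * ⟪w, v'⟫ ≤ ‖w‖ ^ 2 := by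
    have hs : t ^ 2 ≤ ‖x - z'‖ ^ 2 := pow_le_pow_left₀ ht.le h1 2
    rw [e1, norm_sub_sq_real, hv'n] at hs
    linarith
  have hB2 : -(2 * ⟪w, v⟫) ≤ ‖w‖ ^ 2 := by
    have hs : t ^ 2 ≤ ‖x' - z‖ ^ 2 := pow_le_pow_left₀ ht.le h2 2
    rw [e2, norm_neg, norm_add_sq_real, hvn] at hs
    linarith
  -- rewrite the two points as w + c • d
  set d := v - v' with hd
  have key : ∀ c : ℝ, 0 ≤ c →
      ‖(x + c • (z - x)) - (x' + c • (z' - x'))‖ ^ 2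
        = ‖w‖ ^ 2 + 2 * c * ⟪w, d⟫ + c ^ 2 * ‖d‖ ^ 2 := by
    intro c hc
    have hpt : (x + c • (z - x)) - (x' + c • (z' - x')) = w + c • d := by
      rw [hd, hw, hv, hv']; module
    rw [hpt, norm_add_sq_real, real_inner_smul_right, norm_smul, Real.norm_eq_abs,
      abs_of_nonneg hc, mul_pow]
    ring
  have hca : (0:ℝ) ≤ a / t := div_nonneg ha.le ht.le
  have hcb : (0:ℝ) ≤ b / t := div_nonneg (ha.le.trans hab) ht.le
  have ka := key (a / t) hca
  have kb := key (b / t) hcb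
  -- inner product bound: ⟪w, d⟫ ≥ -‖w‖²
  have hBd : -‖w‖ ^ 2 ≤ ⟪w, d⟫ := by
    rw [hd, inner_sub_right]
    linarith
  -- squared inequality
  have hsq : ‖(x + (b / t) • (z - x)) - (x' + (b / t) • (z' - x'))‖ ^ 2
      ≤ ((b / a) * ‖(x + (a / t) • (z - x)) - (x' + (a / t) • (z' - x'))‖) ^ 2 := by
    rw [mul_pow, kb, ka]
    exact quad_aux _ _ _ _ _ _ (sq_nonneg _) (sq_nonneg _) hBd ha hab hbt
  have hRnn : 0 ≤ (b / a) * ‖(x + (a / t) • (z - x)) - (x' + (a / t) • (z' - x'))‖ :=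
    mul_nonneg (div_nonneg (ha.le.trans hab) ha.le) (norm_nonneg _)
  have h := Real.sqrt_le_sqrt hsq
  rwa [Real.sqrt_sq (norm_nonneg _), Real.sqrt_sq hRnn] at h
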